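/- Let V₀, V₁, V₂ ∈ ℤ² be the vertices of a lattice triangle, and for i = 0,1,2 let ℓᵢ be the lattice length of the side joining V_{i+1} and V_{i+2} (indices mod 3), i.e., ℓᵢ = gcd of the coordinate differences of those two vertices. Then gcd(ℓᵢ, ℓⱼ) = gcd(ℓ₀, ℓ₁, ℓ₂) for all i ≠ j. -/

import Mathlib

/-- Lattice length of the segment joining two lattice points. -/
def llen (P Q : ℤ × ℤ) : ℕ := Int.gcd (P.1 - Q.1) (P.2 - Q.2)

/-- Integer dot product on `ℤ × ℤ`. -/
def dotv (u v : ℤ × ℤ) : ℤ := u.1 * v.1 + u.2 * v.2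

/-- The three vertices are not collinear (a genuine triangle). -/
def Noncollinear (V₀ V₁ V₂ : ℤ × ℤ) : Prop :=
  (V₁.1 - V₀.1) * (V₂.2 - V₀.2) - (V₂.1 - V₀.1) * (V₁.2 - V₀.2) ≠ 0

/-- All three interior angles are strictly acute (positive dot products at each vertex). -/
def IsAcute (V₀ V₁ V₂ : ℤ × ℤ) : Prop :=
  0 < dotv (V₁ - V₀) (V₂ - V₀) ∧ 0 < dotv (V₀ - V₁) (V₂ - V₁) ∧
    0 < dotv (V₀ - V₂) (V₁ - V₂)

/-- `H` is the orthocenter of the triangle `V₀V₁V₂`. -/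
def IsOrthocenter (H V₀ V₁ V₂ : ℤ × ℤ) : Prop :=
  dotv (H - V₀) (V₁ - V₂) = 0 ∧ dotv (H - V₁) (V₂ - V₀) = 0 ∧
    dotv (H - V₂) (V₀ - V₁) = 0

/-- `F` is the circumcenter of the triangle `V₀V₁V₂` (equidistant from the vertices). -/
def IsCircumcenter (F V₀ V₁ V₂ : ℤ × ℤ) : Prop :=
  dotv (F - V₀) (F - V₀) = dotv (F - V₁) (F - V₁) ∧
    dotv (F - V₀) (F - V₀) = dotv (F - V₂) (F - V₂)

/-- Lattice perimeter of a lattice triangle. -/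
def latPerim (V₀ V₁ V₂ : ℤ × ℤ) : ℕ := llen V₀ V₁ + llen V₁ V₂ + llen V₀ V₂

/-- The interior angle of the triangle at vertex `V`, with the other vertices `A`, `B`. -/
noncomputable def angleAt (V A B : ℤ × ℤ) : ℝ :=
  Real.arccos ((((A.1 - V.1) * (B.1 - V.1) + (A.2 - V.2) * (B.2 - V.2) : ℤ) : ℝ) /
    (Real.sqrt (((A.1 - V.1) ^ 2 + (A.2 - V.2) ^ 2 : ℤ)) *
      Real.sqrt (((B.1 - V.1) ^ 2 + (B.2 - V.2) ^ 2 : ℤ))))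


lemma llen_comm (P Q : ℤ × ℤ) : llen P Q = llen Q P := by
  unfold llen
  simp only [Int.gcd]
  rw [show P.1 - Q.1 = -(Q.1 - P.1) by ring, show P.2 - Q.2 = -(Q.2 - P.2) by ring,
    Int.natAbs_neg, Int.natAbs_neg]

lemma llen_gcd_dvd (x y z : ℤ × ℤ) : Nat.gcd (llen x y) (llen y z) ∣ llen x z := by
  unfold llen
  rw [← Int.natCast_dvd_natCast]
  set g : ℕ := Nat.gcd (Int.gcd (x.1 - y.1) (x.2 - y.2)) (Int.gcd (y.1 - z.1) (y.2 - z.2))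
    with hg
  have ha : (g : ℤ) ∣ (x.1 - y.1) :=
    dvd_trans (Int.natCast_dvd_natCast.mpr (Nat.gcd_dvd_left _ _)) (Int.gcd_dvd_left _ _)
  have hb : (g : ℤ) ∣ (x.2 - y.2) :=
    dvd_trans (Int.natCast_dvd_natCast.mpr (Nat.gcd_dvd_left _ _)) (Int.gcd_dvd_right _ _)
  have hc : (g : ℤ) ∣ (y.1 - z.1) :=
    dvd_trans (Int.natCast_dvd_natCast.mpr (Nat.gcd_dvd_right _ _)) (Int.gcd_dvd_left _ _)
  have hd : (g : ℤ) ∣ (y.2 - z.2) :=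
    dvd_trans (Int.natCast_dvd_natCast.mpr (Nat.gcd_dvd_right _ _)) (Int.gcd_dvd_right _ _)
  refine Int.dvd_coe_gcd ?_ ?_
  · simpa [show x.1 - y.1 + (y.1 - z.1) = x.1 - z.1 by ring] using dvd_add ha hc
  · simpa [show x.2 - y.2 + (y.2 - z.2) = x.2 - z.2 by ring] using dvd_add hb hd

theorem stmt2 (V : Fin 3 → ℤ × ℤ) (hT : Noncollinear (V 0) (V 1) (V 2))
    (ℓ : Fin 3 → ℕ) (hℓ : ∀ i, ℓ i = llen (V (i + 1)) (V (i + 2))) :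
    ∀ i j, i ≠ j → Nat.gcd (ℓ i) (ℓ j) = Nat.gcd (ℓ 0) (Nat.gcd (ℓ 1) (ℓ 2)) := by
  have e0 : ℓ 0 = llen (V 1) (V 2) := hℓ 0
  have e1 : ℓ 1 = llen (V 2) (V 0) := hℓ 1
  have e2 : ℓ 2 = llen (V 0) (V 1) := hℓ 2
  have h01 : Nat.gcd (ℓ 0) (ℓ 1) ∣ ℓ 2 := by
    rw [e0, e1, e2, llen_comm (V 0) (V 1)]; exact llen_gcd_dvd _ _ _
  have h12 : Nat.gcd (ℓ 1) (ℓ 2) ∣ ℓ 0 := by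
    rw [e0, e1, e2, llen_comm (V 1) (V 2)]; exact llen_gcd_dvd _ _ _
  have h02 : Nat.gcd (ℓ 0) (ℓ 2) ∣ ℓ 1 := by
    rw [e0, e1, e2, Nat.gcd_comm, llen_comm (V 2) (V 0)]; exact llen_gcd_dvd _ _ _
  have Gdvd : ∀ k, Nat.gcd (ℓ 0) (Nat.gcd (ℓ 1) (ℓ 2)) ∣ ℓ k := by
    intro k
    fin_cases k
    · exact Nat.gcd_dvd_left _ _
    · exact dvd_trans (Nat.gcd_dvd_right _ _) (Nat.gcd_dvd_left _ _)
    · exact dvd_trans (Nat.gcd_dvd_right _ _) (Nat.gcd_dvd_right _ _)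
  intro i j hij
  have H : ∀ k, Nat.gcd (ℓ i) (ℓ j) ∣ ℓ k := by
    intro k
    fin_cases i <;> fin_cases j <;> fin_cases k <;>
      first
      | exact absurd rfl hij
      | exact Nat.gcd_dvd_left _ _
      | exact Nat.gcd_dvd_right _ _
      | exact h01
      | exact h12
      | exact h02
      | (rw [Nat.gcd_comm]; first | exact h01 | exact h12 | exact h02)
  exact Nat.dvd_antisymm (Nat.dvd_gcd (H 0) (Nat.dvd_gcd (H 1) (H 2)))
    (Nat.dvd_gcd (Gdvd i) (Gdvd j))
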